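/- arXiv:2105.00208 — 7 statements merged into one kernel-verified Lean document; each statement's English description precedes it below -/
import Mathlib

section
/- Weak sequencing is associative at the level of sets of traces: for any sets of traces T1, T2, T3, (T1 ;w T2) ;w T3 = T1 ;w (T2 ;w T3). -/
universe u v
variable {A : Type u} {L : Type v}

/-- Trace `t` has a conflict with lifeline `l`: it contains an action occurring on `l`. -/
def Conflict (θ : A → L) (t : List A) (l : L) : Prop := ∃ a ∈ t, θ a = l

/-- `Interl t1 t2 t` : `t` is an interleaving of traces `t1` and `t2`. -/
inductive Interl : List A → List A → List A → Prop
  | nil_left (t : List A) : Interl [] t t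
  | nil_right (t : List A) : Interl t [] t
  | cons_left (a : A) {t1 t2 t : List A} : Interl t1 t2 t → Interl (a :: t1) t2 (a :: t)
  | cons_right (a : A) {t1 t2 t : List A} : Interl t1 t2 t → Interl t1 (a :: t2) (a :: t)

/-- `WeakSeq θ t1 t2 t` : `t` is a weak sequencing of `t1` and `t2`. -/
inductive WeakSeq (θ : A → L) : List A → List A → List A → Prop
  | nil_left (t : List A) : WeakSeq θ [] t t
  | nil_right (t : List A) : WeakSeq θ t [] t
  | cons_left (a : A) {t1 t2 t : List A} : WeakSeq θ t1 t2 t → WeakSeq θ (a :: t1) t2 (a :: t)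
  | cons_right (a : A) {t1 t2 t : List A} : WeakSeq θ t1 t2 t → ¬ Conflict θ t1 (θ a) →
      WeakSeq θ t1 (a :: t2) (a :: t)

/-- Interleaving of sets of traces. -/
def interlS (T1 T2 : Set (List A)) : Set (List A) :=
  {t | ∃ t1 ∈ T1, ∃ t2 ∈ T2, Interl t1 t2 t}

/-- Weak sequencing of sets of traces. -/
def weakS (θ : A → L) (T1 T2 : Set (List A)) : Set (List A) :=
  {t | ∃ t1 ∈ T1, ∃ t2 ∈ T2, WeakSeq θ t1 t2 t}

/-- Strict sequencing (concatenation) of sets of traces. -/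
def concatS (T1 T2 : Set (List A)) : Set (List A) :=
  {t | ∃ t1 ∈ T1, ∃ t2 ∈ T2, t = t1 ++ t2}

/-- Restricted version of a scheduling operator: the first action must come from the left. -/
def restr (op : Set (List A) → Set (List A) → Set (List A)) (T1 T2 : Set (List A)) :
    Set (List A) :=
  {t | t ∈ op T1 T2 ∧ ∀ a t', t = a :: t' → ∃ t1, a :: t1 ∈ T1 ∧ t ∈ op {t1} T2}

/-- Powers of a set of traces w.r.t. a scheduling operator. -/
def power (op : Set (List A) → Set (List A) → Set (List A)) (T : Set (List A)) :
    ℕ → Set (List A)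
  | 0 => {[]}
  | n + 1 => op T (power op T n)

/-- Kleene closure of a set of traces w.r.t. a scheduling operator. -/
def kleene (op : Set (List A) → Set (List A) → Set (List A)) (T : Set (List A)) :
    Set (List A) :=
  ⋃ n, power op T n

lemma WeakSeq.mem {θ : A → L} {t1 t2 t : List A} (h : WeakSeq θ t1 t2 t) :
    ∀ a, a ∈ t ↔ a ∈ t1 ∨ a ∈ t2 := by
  induction h with
  | nil_left t => simp
  | nil_right t => simp
  | cons_left a _ ih => intro b; simp [ih b]; tauto
  | cons_right a _ _ ih => intro b; simp [ih b]; tauto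

lemma conflict_iff {θ : A → L} {t1 t2 t : List A} (h : WeakSeq θ t1 t2 t) (l : L) :
    Conflict θ t l ↔ Conflict θ t1 l ∨ Conflict θ t2 l := by
  constructor
  · rintro ⟨a, ha, rfl⟩
    rcases (h.mem a).1 ha with h' | h'
    · exact Or.inl ⟨a, h', rfl⟩
    · exact Or.inr ⟨a, h', rfl⟩
  · rintro (⟨a, ha, rfl⟩ | ⟨a, ha, rfl⟩) <;>
      exact ⟨a, (h.mem a).2 (by tauto), rfl⟩

lemma WeakSeq.nil_inv {θ : A → L} {t1 t2 : List A} (h : WeakSeq θ t1 t2 []) :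
    t1 = [] ∧ t2 = [] := by cases h <;> simp_all

lemma weakSeq_assoc1 {θ : A → L} {t12 t3 t : List A} (h : WeakSeq θ t12 t3 t) :
    ∀ t1 t2, WeakSeq θ t1 t2 t12 →
      ∃ t23, WeakSeq θ t2 t3 t23 ∧ WeakSeq θ t1 t23 t := by
  induction h with
  | nil_left t =>
      intro t1 t2 h12
      obtain ⟨rfl, rfl⟩ := h12.nil_inv
      exact ⟨t, WeakSeq.nil_left t, WeakSeq.nil_left t⟩
  | nil_right t =>
      intro t1 t2 h12
      exact ⟨t2, WeakSeq.nil_right t2, h12⟩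
  | cons_left a h ih =>
      intro t1 t2 h12
      cases h12 with
      | nil_left => exact ⟨_, WeakSeq.cons_left a h, WeakSeq.nil_left _⟩
      | nil_right =>
          obtain ⟨t23, h23, h1⟩ := ih _ _ (WeakSeq.nil_right _)
          exact ⟨t23, h23, WeakSeq.cons_left a h1⟩
      | cons_left b h12' =>
          obtain ⟨t23, h23, h1⟩ := ih _ _ h12'
          exact ⟨t23, h23, WeakSeq.cons_left a h1⟩
      | cons_right b h12' hc =>
          obtain ⟨t23, h23, h1⟩ := ih _ _ h12'
          exact ⟨a :: t23, WeakSeq.cons_left a h23, WeakSeq.cons_right a h1 hc⟩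
  | cons_right a h hc ih =>
      intro t1 t2 h12
      obtain ⟨t23, h23, h1⟩ := ih _ _ h12
      rw [conflict_iff h12] at hc
      push_neg at hc
      exact ⟨a :: t23, WeakSeq.cons_right a h23 hc.2, WeakSeq.cons_right a h1 hc.1⟩

lemma weakSeq_assoc2 {θ : A → L} {t1 t23 t : List A} (h : WeakSeq θ t1 t23 t) :
    ∀ t2 t3, WeakSeq θ t2 t3 t23 →
      ∃ t12, WeakSeq θ t1 t2 t12 ∧ WeakSeq θ t12 t3 t := by
  induction h with
  | nil_left t =>
      intro t2 t3 h23
      exact ⟨t2, WeakSeq.nil_left t2, h23⟩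
  | nil_right t =>
      intro t2 t3 h23
      obtain ⟨rfl, rfl⟩ := h23.nil_inv
      exact ⟨t, WeakSeq.nil_right t, WeakSeq.nil_right t⟩
  | cons_left a h ih =>
      intro t2 t3 h23
      obtain ⟨t12, h12, h3⟩ := ih _ _ h23
      exact ⟨a :: t12, WeakSeq.cons_left a h12, WeakSeq.cons_left a h3⟩
  | cons_right a h hc ih =>
      intro t2 t3 h23
      cases h23 with
      | nil_left => exact ⟨_, WeakSeq.nil_right _, WeakSeq.cons_right a h hc⟩
      | nil_right =>
          obtain ⟨t12, h12, h3⟩ := ih _ _ (WeakSeq.nil_right _)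
          exact ⟨a :: t12, WeakSeq.cons_right a h12 hc, WeakSeq.cons_left a h3⟩
      | cons_left b h23' =>
          obtain ⟨t12, h12, h3⟩ := ih _ _ h23'
          exact ⟨a :: t12, WeakSeq.cons_right a h12 hc, WeakSeq.cons_left a h3⟩
      | cons_right b h23' hc2 =>
          obtain ⟨t12, h12, h3⟩ := ih _ _ h23'
          refine ⟨t12, h12, WeakSeq.cons_right a h3 ?_⟩
          rw [conflict_iff h12]
          tauto

theorem weakS_assoc {A : Type u} {L : Type v} (θ : A → L) (T1 T2 T3 : Set (List A)) :
    weakS θ (weakS θ T1 T2) T3 = weakS θ T1 (weakS θ T2 T3) := by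
  ext t
  constructor
  · rintro ⟨t12, ⟨t1, h1, t2, h2, h12⟩, t3, h3, h⟩
    obtain ⟨t23, h23, h'⟩ := weakSeq_assoc1 h _ _ h12
    exact ⟨t1, h1, t23, ⟨t2, h2, t3, h3, h23⟩, h'⟩
  · rintro ⟨t1, h1, t23, ⟨t2, h2, t3, h3, h23⟩, h⟩
    obtain ⟨t12, h12, h'⟩ := weakSeq_assoc2 h _ _ h23
    exact ⟨t12, ⟨t1, h1, t2, h2, h12⟩, t3, h3, h'⟩
end

section
/- The conflict predicate distributes over weak sequencing: for any traces t1, t2, any trace t ∈ t1 ;w t2, and any lifeline l, t ⋈ l if and only if (t1 ⋈ l or t2 ⋈ l). -/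
universe u v
variable {A : Type u} {L : Type v}

theorem conflict_weakSeq {A : Type u} {L : Type v} (θ : A → L) {t1 t2 t : List A}
    (h : WeakSeq θ t1 t2 t) (l : L) :
    Conflict θ t l ↔ Conflict θ t1 l ∨ Conflict θ t2 l := by
  induction h with
  | nil_left t => simp [Conflict]
  | nil_right t => simp [Conflict]
  | cons_left a h ih =>
    simp only [Conflict, List.mem_cons] at *
    constructor
    · rintro ⟨x, hx | hx, hθ⟩
      · exact Or.inl ⟨x, Or.inl hx, hθ⟩
      · rcases ih.mp ⟨x, hx, hθ⟩ with ⟨y, hy, h2⟩ | h2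
        · exact Or.inl ⟨y, Or.inr hy, h2⟩
        · exact Or.inr h2
    · rintro (⟨x, hx | hx, hθ⟩ | h2)
      · exact ⟨x, Or.inl hx, hθ⟩
      · rcases ih.mpr (Or.inl ⟨x, hx, hθ⟩) with ⟨y, hy, h2⟩
        exact ⟨y, Or.inr hy, h2⟩
      · rcases ih.mpr (Or.inr h2) with ⟨y, hy, h2⟩
        exact ⟨y, Or.inr hy, h2⟩
  | cons_right a h hc ih =>
    simp only [Conflict, List.mem_cons] at *
    constructor
    · rintro ⟨x, hx | hx, hθ⟩
      · exact Or.inr ⟨x, Or.inl hx, hθ⟩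
      · rcases ih.mp ⟨x, hx, hθ⟩ with h2 | ⟨y, hy, h2⟩
        · exact Or.inl h2
        · exact Or.inr ⟨y, Or.inr hy, h2⟩
    · rintro (h2 | ⟨x, hx | hx, hθ⟩)
      · rcases ih.mpr (Or.inl h2) with ⟨y, hy, h2⟩
        exact ⟨y, Or.inr hy, h2⟩
      · exact ⟨x, Or.inl hx, hθ⟩
      · rcases ih.mpr (Or.inr ⟨x, hx, hθ⟩) with ⟨y, hy, h2⟩
        exact ⟨y, Or.inr hy, h2⟩
end

section
/- For the interleaving closure: if a.t belongs to the Kleene closure T^{||*} of a set of traces T, then there exists a trace t' such that a.t' ∈ T and t ∈ {t'} || T^{||*}. -/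
universe u v
variable {A : Type u} {L : Type v}

lemma interl_nil {A : Type u} {b c : List A} (h : Interl b c ([] : List A)) :
    b = [] ∧ c = [] := by
  cases h <;> simp_all

lemma interl_cons_inv {A : Type u} {b c r : List A} {x : A} (h : Interl b c (x :: r)) :
    (∃ b', b = x :: b' ∧ Interl b' c r) ∨ (∃ c', c = x :: c' ∧ Interl b c' r) := by
  cases h with
  | nil_left t => exact Or.inr ⟨r, rfl, Interl.nil_left r⟩
  | nil_right t => exact Or.inl ⟨r, rfl, Interl.nil_right r⟩
  | cons_left a h => exact Or.inl ⟨_, rfl, h⟩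
  | cons_right a h => exact Or.inr ⟨_, rfl, h⟩

lemma interl_rot {A : Type u} {a b c bc t : List A}
    (h2 : Interl a bc t) (h1 : Interl b c bc) :
    ∃ u, Interl a c u ∧ Interl b u t := by
  induction h2 generalizing b c with
  | nil_left t => exact ⟨c, Interl.nil_left c, h1⟩
  | nil_right t =>
      obtain ⟨hb, hc⟩ := interl_nil h1
      subst hb; subst hc
      exact ⟨t, Interl.nil_right t, Interl.nil_left t⟩
  | cons_left x h ih =>
      obtain ⟨u, hu1, hu2⟩ := ih h1
      exact ⟨x :: u, Interl.cons_left x hu1, Interl.cons_right x hu2⟩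
  | cons_right x h ih =>
      rcases interl_cons_inv h1 with ⟨b', rfl, hb'⟩ | ⟨c', rfl, hc'⟩
      · obtain ⟨u, hu1, hu2⟩ := ih hb'
        exact ⟨u, hu1, Interl.cons_left x hu2⟩
      · obtain ⟨u, hu1, hu2⟩ := ih hc'
        exact ⟨x :: u, Interl.cons_right x hu1, Interl.cons_right x hu2⟩

theorem kleene_interl_head {A : Type u} (T : Set (List A)) (a : A) (t : List A)
    (h : a :: t ∈ kleene interlS T) :
    ∃ t' : List A, a :: t' ∈ T ∧ t ∈ interlS {t'} (kleene interlS T) := by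
  obtain ⟨S, ⟨n, rfl⟩, hmem⟩ := h
  induction n generalizing t with
  | zero => simp [power] at hmem
  | succ n ih =>
      obtain ⟨t1, ht1, t2, ht2, hI⟩ := hmem
      rcases interl_cons_inv hI with ⟨t1', rfl, h1'⟩ | ⟨t2', rfl, h2'⟩
      · exact ⟨t1', ht1, t1', rfl, t2, Set.mem_iUnion.2 ⟨n, ht2⟩, h1'⟩
      · obtain ⟨t', ht', u', hu'eq, s, hs, hI2⟩ := ih t2' ht2
        obtain ⟨m, hsm⟩ := Set.mem_iUnion.1 hs
        obtain ⟨u, hu1, hu2⟩ := interl_rot h2' (hu'eq ▸ hI2)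
        exact ⟨t', ht', t', rfl, u, Set.mem_iUnion.2 ⟨m + 1, t1, ht1, s, hsm, hu1⟩, hu2⟩
end

section
/- The weak head-first closure and the weak Kleene closure differ: with two lifelines l1 ≠ l2 and actions l1!m1, l2?m1, l2!m2, letting T = {l1!m1.l2?m1, l2!m2}, the trace l1!m1.l2!m2.l2?m1 belongs to T^{;w*} but not to T^{;w↰*}; hence T^{;w*} ⊄ T^{;w↰*}. -/
universe u v
variable {A : Type u} {L : Type v}

theorem weak_headfirst_ne_kleene {A : Type u} {L : Type v} (θ : A → L)
    (l1 l2 : L) (a1 a2 a3 : A) (hl : l1 ≠ l2)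
    (h1 : θ a1 = l1) (h2 : θ a2 = l2) (h3 : θ a3 = l2) (ha : a2 ≠ a3) :
    [a1, a3, a2] ∈ kleene (weakS θ) ({[a1, a2], [a3]} : Set (List A)) ∧
      [a1, a3, a2] ∉ kleene (restr (weakS θ)) ({[a1, a2], [a3]} : Set (List A)) := by
  have ha13 : a1 ≠ a3 := fun h => hl (by rw [← h1, h, h3])
  have ha12 : a1 ≠ a2 := fun h => hl (by rw [← h1, h, h2])
  constructor
  · refine Set.mem_iUnion.2 ⟨2, ?_⟩
    refine ⟨[a3], Or.inr rfl, [a1, a2], ⟨[a1, a2], Or.inl rfl, [], rfl, WeakSeq.nil_right _⟩, ?_⟩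
    refine WeakSeq.cons_right a1 ?_ ?_
    · exact WeakSeq.cons_left a3 (WeakSeq.nil_left _)
    · rintro ⟨a, hm, hθ⟩
      simp at hm; subst hm
      exact hl (by rw [← h1, ← hθ, h3])
  · intro hmem
    obtain ⟨_, ⟨n, rfl⟩, hn⟩ := hmem
    cases n with
    | zero => simp [power] at hn
    | succ m =>
      obtain ⟨-, hcond⟩ := hn
      obtain ⟨t1, ht1, hw⟩ := hcond a1 [a3, a2] rfl
      have ht1' : t1 = [a2] := by
        simp only [Set.mem_insert_iff, Set.mem_singleton_iff, List.cons.injEq] at ht1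
        rcases ht1 with ⟨-, h⟩ | ⟨h, -⟩
        · exact h
        · exact absurd h ha13
      subst ht1'
      obtain ⟨s1, hs1, s2, hs2, hws⟩ := hw
      rw [Set.mem_singleton_iff] at hs1; subst hs1
      cases hws with
      | cons_left _ _ => exact ha12 rfl
      | cons_right _ hw' hnc =>
        cases hw' with
        | cons_left _ _ => exact ha rfl
        | cons_right _ _ hnc2 => exact hnc2 ⟨a2, by simp, by rw [h2, h3]⟩
end

section
/- Evasion characterizes existence of a conflict-free trace: for any lifeline l and interaction term i, the inductive evasion predicate i ↓w l holds if and only if there exists a trace t ∈ σ_d(i) such that ¬(t ⋈ l). -/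
universe u v
variable {A : Type u} {L : Type v}

/-- Interaction terms. -/
inductive Interaction (A : Type u) : Type u
  | empty : Interaction A
  | act : A → Interaction A
  | strict : Interaction A → Interaction A → Interaction A
  | seq : Interaction A → Interaction A → Interaction A
  | par : Interaction A → Interaction A → Interaction A
  | alt : Interaction A → Interaction A → Interaction A
  | loopX : Interaction A → Interaction A
  | loopH : Interaction A → Interaction A
  | loopS : Interaction A → Interaction A
  | loopP : Interaction A → Interaction A

/-- Denotational semantics of interactions. -/
def sem (θ : A → L) : Interaction A → Set (List A)
  | .empty => {[]}
  | .act a => {[a]}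
  | .strict i1 i2 => concatS (sem θ i1) (sem θ i2)
  | .seq i1 i2 => weakS θ (sem θ i1) (sem θ i2)
  | .par i1 i2 => interlS (sem θ i1) (sem θ i2)
  | .alt i1 i2 => sem θ i1 ∪ sem θ i2
  | .loopX i1 => kleene concatS (sem θ i1)
  | .loopH i1 => kleene (restr (weakS θ)) (sem θ i1)
  | .loopS i1 => kleene (weakS θ) (sem θ i1)
  | .loopP i1 => kleene interlS (sem θ i1)

/-- Termination predicate `i ↓`. -/
inductive Terminates : Interaction A → Prop
  | empty : Terminates .empty
  | alt_left {i1 i2 : Interaction A} : Terminates i1 → Terminates (.alt i1 i2)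
  | alt_right {i1 i2 : Interaction A} : Terminates i2 → Terminates (.alt i1 i2)
  | strict {i1 i2 : Interaction A} : Terminates i1 → Terminates i2 → Terminates (.strict i1 i2)
  | seq {i1 i2 : Interaction A} : Terminates i1 → Terminates i2 → Terminates (.seq i1 i2)
  | par {i1 i2 : Interaction A} : Terminates i1 → Terminates i2 → Terminates (.par i1 i2)
  | loopX (i1 : Interaction A) : Terminates (.loopX i1)
  | loopH (i1 : Interaction A) : Terminates (.loopH i1)
  | loopS (i1 : Interaction A) : Terminates (.loopS i1)
  | loopP (i1 : Interaction A) : Terminates (.loopP i1)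

/-- Evasion predicate `i ↓w l`. -/
inductive Evades (θ : A → L) : Interaction A → L → Prop
  | empty (l : L) : Evades θ .empty l
  | act {a : A} {l : L} : θ a ≠ l → Evades θ (.act a) l
  | alt_left {i1 i2 : Interaction A} {l : L} : Evades θ i1 l → Evades θ (.alt i1 i2) l
  | alt_right {i1 i2 : Interaction A} {l : L} : Evades θ i2 l → Evades θ (.alt i1 i2) l
  | strict {i1 i2 : Interaction A} {l : L} :
      Evades θ i1 l → Evades θ i2 l → Evades θ (.strict i1 i2) l
  | seq {i1 i2 : Interaction A} {l : L} :
      Evades θ i1 l → Evades θ i2 l → Evades θ (.seq i1 i2) l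
  | par {i1 i2 : Interaction A} {l : L} :
      Evades θ i1 l → Evades θ i2 l → Evades θ (.par i1 i2) l
  | loopX (i1 : Interaction A) (l : L) : Evades θ (.loopX i1) l
  | loopH (i1 : Interaction A) (l : L) : Evades θ (.loopH i1) l
  | loopS (i1 : Interaction A) (l : L) : Evades θ (.loopS i1) l
  | loopP (i1 : Interaction A) (l : L) : Evades θ (.loopP i1) l

/-- Pruning relation `i ⇝_l i'`. -/
inductive Prune (θ : A → L) (l : L) : Interaction A → Interaction A → Prop
  | empty : Prune θ l .empty .empty
  | act {a : A} : θ a ≠ l → Prune θ l (.act a) (.act a)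
  | strict {i1 i2 i1' i2' : Interaction A} :
      Prune θ l i1 i1' → Prune θ l i2 i2' → Prune θ l (.strict i1 i2) (.strict i1' i2')
  | seq {i1 i2 i1' i2' : Interaction A} :
      Prune θ l i1 i1' → Prune θ l i2 i2' → Prune θ l (.seq i1 i2) (.seq i1' i2')
  | par {i1 i2 i1' i2' : Interaction A} :
      Prune θ l i1 i1' → Prune θ l i2 i2' → Prune θ l (.par i1 i2) (.par i1' i2')
  | alt_both {i1 i2 i1' i2' : Interaction A} :
      Prune θ l i1 i1' → Prune θ l i2 i2' → Prune θ l (.alt i1 i2) (.alt i1' i2')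
  | alt_left {i1 i2 i1' : Interaction A} :
      Prune θ l i1 i1' → ¬ Evades θ i2 l → Prune θ l (.alt i1 i2) i1'
  | alt_right {i1 i2 i2' : Interaction A} :
      Prune θ l i2 i2' → ¬ Evades θ i1 l → Prune θ l (.alt i1 i2) i2'
  | loopX {i1 i1' : Interaction A} : Prune θ l i1 i1' → Prune θ l (.loopX i1) (.loopX i1')
  | loopH {i1 i1' : Interaction A} : Prune θ l i1 i1' → Prune θ l (.loopH i1) (.loopH i1')
  | loopS {i1 i1' : Interaction A} : Prune θ l i1 i1' → Prune θ l (.loopS i1) (.loopS i1')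
  | loopP {i1 i1' : Interaction A} : Prune θ l i1 i1' → Prune θ l (.loopP i1) (.loopP i1')
  | loopX_elim {i1 : Interaction A} : ¬ Evades θ i1 l → Prune θ l (.loopX i1) .empty
  | loopH_elim {i1 : Interaction A} : ¬ Evades θ i1 l → Prune θ l (.loopH i1) .empty
  | loopS_elim {i1 : Interaction A} : ¬ Evades θ i1 l → Prune θ l (.loopS i1) .empty
  | loopP_elim {i1 : Interaction A} : ¬ Evades θ i1 l → Prune θ l (.loopP i1) .empty

/-- Execution relation `i →a i'`. -/
inductive Exec (θ : A → L) : Interaction A → A → Interaction A → Prop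
  | act (a : A) : Exec θ (.act a) a .empty
  | alt_left {i1 i2 i1' : Interaction A} {a : A} :
      Exec θ i1 a i1' → Exec θ (.alt i1 i2) a i1'
  | alt_right {i1 i2 i2' : Interaction A} {a : A} :
      Exec θ i2 a i2' → Exec θ (.alt i1 i2) a i2'
  | par_left {i1 i2 i1' : Interaction A} {a : A} :
      Exec θ i1 a i1' → Exec θ (.par i1 i2) a (.par i1' i2)
  | par_right {i1 i2 i2' : Interaction A} {a : A} :
      Exec θ i2 a i2' → Exec θ (.par i1 i2) a (.par i1 i2')
  | strict_left {i1 i2 i1' : Interaction A} {a : A} :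
      Exec θ i1 a i1' → Exec θ (.strict i1 i2) a (.strict i1' i2)
  | strict_right {i1 i2 i2' : Interaction A} {a : A} :
      Exec θ i2 a i2' → Terminates i1 → Exec θ (.strict i1 i2) a i2'
  | seq_left {i1 i2 i1' : Interaction A} {a : A} :
      Exec θ i1 a i1' → Exec θ (.seq i1 i2) a (.seq i1' i2)
  | seq_right {i1 i2 i1' i2' : Interaction A} {a : A} :
      Prune θ (θ a) i1 i1' → Exec θ i2 a i2' → Exec θ (.seq i1 i2) a (.seq i1' i2')
  | loopX {i1 i1' : Interaction A} {a : A} :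
      Exec θ i1 a i1' → Exec θ (.loopX i1) a (.strict i1' (.loopX i1))
  | loopH {i1 i1' : Interaction A} {a : A} :
      Exec θ i1 a i1' → Exec θ (.loopH i1) a (.seq i1' (.loopH i1))
  | loopS {i1 i1' i' : Interaction A} {a : A} :
      Exec θ i1 a i1' → Prune θ (θ a) (.loopS i1) i' →
      Exec θ (.loopS i1) a (.seq i' (.seq i1' (.loopS i1)))
  | loopP {i1 i1' : Interaction A} {a : A} :
      Exec θ i1 a i1' → Exec θ (.loopP i1) a (.par i1' (.loopP i1))

/-- Operational semantics `σ_o`. -/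
inductive SemO (θ : A → L) : Interaction A → List A → Prop
  | empty {i : Interaction A} : Terminates i → SemO θ i []
  | step {i i' : Interaction A} {a : A} {t : List A} :
      Exec θ i a i' → SemO θ i' t → SemO θ i (a :: t)

lemma interl_append (t1 t2 : List A) : Interl t1 t2 (t1 ++ t2) := by
  induction t1 with
  | nil => exact Interl.nil_left t2
  | cons a t ih => exact Interl.cons_left a ih

lemma weakSeq_append (θ : A → L) (t1 t2 : List A) : WeakSeq θ t1 t2 (t1 ++ t2) := by
  induction t1 with
  | nil => exact WeakSeq.nil_left t2
  | cons a t ih => exact WeakSeq.cons_left a ih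

lemma interl_mem {t1 t2 t : List A} (h : Interl t1 t2 t) {a : A}
    (ha : a ∈ t1 ∨ a ∈ t2) : a ∈ t := by
  induction h with
  | nil_left t => exact ha.resolve_left (by simp)
  | nil_right t => exact ha.resolve_right (by simp)
  | cons_left b h ih =>
    rcases ha with h | h
    · rcases List.mem_cons.mp h with h | h
      · simp [h]
      · exact List.mem_cons_of_mem _ (ih (Or.inl h))
    · exact List.mem_cons_of_mem _ (ih (Or.inr h))
  | cons_right b h ih =>
    rcases ha with h | h
    · exact List.mem_cons_of_mem _ (ih (Or.inl h))
    · rcases List.mem_cons.mp h with h | h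
      · simp [h]
      · exact List.mem_cons_of_mem _ (ih (Or.inr h))

lemma weakSeq_mem {θ : A → L} {t1 t2 t : List A} (h : WeakSeq θ t1 t2 t) {a : A}
    (ha : a ∈ t1 ∨ a ∈ t2) : a ∈ t := by
  induction h with
  | nil_left t => exact ha.resolve_left (by simp)
  | nil_right t => exact ha.resolve_right (by simp)
  | cons_left b h ih =>
    rcases ha with h | h
    · rcases List.mem_cons.mp h with h | h
      · simp [h]
      · exact List.mem_cons_of_mem _ (ih (Or.inl h))
    · exact List.mem_cons_of_mem _ (ih (Or.inr h))
  | cons_right b h hc ih =>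
    rcases ha with h | h
    · exact List.mem_cons_of_mem _ (ih (Or.inl h))
    · rcases List.mem_cons.mp h with h | h
      · simp [h]
      · exact List.mem_cons_of_mem _ (ih (Or.inr h))

lemma not_conflict_append {θ : A → L} {t1 t2 : List A} {l : L}
    (h1 : ¬ Conflict θ t1 l) (h2 : ¬ Conflict θ t2 l) : ¬ Conflict θ (t1 ++ t2) l := by
  rintro ⟨a, ha, hl⟩
  rcases List.mem_append.mp ha with h | h
  · exact h1 ⟨a, h, hl⟩
  · exact h2 ⟨a, h, hl⟩

theorem evades_iff_exists_conflict_free {A : Type u} {L : Type v} (θ : A → L)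
    (l : L) (i : Interaction A) :
    Evades θ i l ↔ ∃ t ∈ sem θ i, ¬ Conflict θ t l := by
  constructor
  · intro h
    induction h with
    | empty l => exact ⟨[], rfl, by simp [Conflict]⟩
    | @act a l hne => exact ⟨[a], rfl, by simp [Conflict, hne]⟩
    | alt_left h ih =>
      obtain ⟨t, ht, hc⟩ := ih
      exact ⟨t, Or.inl ht, hc⟩
    | alt_right h ih =>
      obtain ⟨t, ht, hc⟩ := ih
      exact ⟨t, Or.inr ht, hc⟩
    | strict h1 h2 ih1 ih2 =>
      obtain ⟨t1, ht1, hc1⟩ := ih1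
      obtain ⟨t2, ht2, hc2⟩ := ih2
      exact ⟨t1 ++ t2, ⟨t1, ht1, t2, ht2, rfl⟩, not_conflict_append hc1 hc2⟩
    | seq h1 h2 ih1 ih2 =>
      obtain ⟨t1, ht1, hc1⟩ := ih1
      obtain ⟨t2, ht2, hc2⟩ := ih2
      exact ⟨t1 ++ t2, ⟨t1, ht1, t2, ht2, weakSeq_append θ t1 t2⟩,
        not_conflict_append hc1 hc2⟩
    | par h1 h2 ih1 ih2 =>
      obtain ⟨t1, ht1, hc1⟩ := ih1
      obtain ⟨t2, ht2, hc2⟩ := ih2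
      exact ⟨t1 ++ t2, ⟨t1, ht1, t2, ht2, interl_append t1 t2⟩,
        not_conflict_append hc1 hc2⟩
    | loopX i1 l =>
      exact ⟨[], Set.mem_iUnion.mpr ⟨0, rfl⟩, by simp [Conflict]⟩
    | loopH i1 l =>
      exact ⟨[], Set.mem_iUnion.mpr ⟨0, rfl⟩, by simp [Conflict]⟩
    | loopS i1 l =>
      exact ⟨[], Set.mem_iUnion.mpr ⟨0, rfl⟩, by simp [Conflict]⟩
    | loopP i1 l =>
      exact ⟨[], Set.mem_iUnion.mpr ⟨0, rfl⟩, by simp [Conflict]⟩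
  · intro h
    induction i with
    | empty => exact Evades.empty l
    | act a =>
      obtain ⟨t, ht, hc⟩ := h
      rcases ht with rfl
      refine Evades.act fun he => hc ⟨a, by simp, he⟩
    | strict i1 i2 ih1 ih2 =>
      obtain ⟨t, ⟨t1, ht1, t2, ht2, rfl⟩, hc⟩ := h
      exact Evades.strict
        (ih1 ⟨t1, ht1, fun ⟨a, ha, hl⟩ => hc ⟨a, List.mem_append.mpr (Or.inl ha), hl⟩⟩)
        (ih2 ⟨t2, ht2, fun ⟨a, ha, hl⟩ => hc ⟨a, List.mem_append.mpr (Or.inr ha), hl⟩⟩)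
    | seq i1 i2 ih1 ih2 =>
      obtain ⟨t, ⟨t1, ht1, t2, ht2, hw⟩, hc⟩ := h
      exact Evades.seq
        (ih1 ⟨t1, ht1, fun ⟨a, ha, hl⟩ => hc ⟨a, weakSeq_mem hw (Or.inl ha), hl⟩⟩)
        (ih2 ⟨t2, ht2, fun ⟨a, ha, hl⟩ => hc ⟨a, weakSeq_mem hw (Or.inr ha), hl⟩⟩)
    | par i1 i2 ih1 ih2 =>
      obtain ⟨t, ⟨t1, ht1, t2, ht2, hw⟩, hc⟩ := h
      exact Evades.par
        (ih1 ⟨t1, ht1, fun ⟨a, ha, hl⟩ => hc ⟨a, interl_mem hw (Or.inl ha), hl⟩⟩)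
        (ih2 ⟨t2, ht2, fun ⟨a, ha, hl⟩ => hc ⟨a, interl_mem hw (Or.inr ha), hl⟩⟩)
    | alt i1 i2 ih1 ih2 =>
      obtain ⟨t, ht, hc⟩ := h
      rcases ht with ht | ht
      · exact Evades.alt_left (ih1 ⟨t, ht, hc⟩)
      · exact Evades.alt_right (ih2 ⟨t, ht, hc⟩)
    | loopX i1 _ => exact Evades.loopX i1 l
    | loopH i1 _ => exact Evades.loopH i1 l
    | loopS i1 _ => exact Evades.loopS i1 l
    | loopP i1 _ => exact Evades.loopP i1 l
end

section
/- Termination implies evasion: for any interaction term i, if i↓ then for every lifeline l, i ↓w l; moreover the converse fails, e.g. for i = alt(l1!m, l2!m) with two lifelines l1 ≠ l2, i evades every lifeline but does not terminate. -/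
universe u v
variable {A : Type u} {L : Type v}

theorem terminates_implies_evades {A : Type u} {L : Type v} (θ : A → L) :
    (∀ i : Interaction A, Terminates i → ∀ l : L, Evades θ i l) ∧
      (∀ (l1 l2 : L) (a1 a2 : A), l1 ≠ l2 → θ a1 = l1 → θ a2 = l2 →
        (∀ l : L, Evades θ (Interaction.alt (.act a1) (.act a2)) l) ∧
          ¬ Terminates (Interaction.alt (Interaction.act a1) (Interaction.act a2))) := by
  constructor
  · intro i h l
    induction h with
    | empty => exact .empty l
    | alt_left _ ih => exact .alt_left ih
    | alt_right _ ih => exact .alt_right ih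
    | strict _ _ ih1 ih2 => exact .strict ih1 ih2
    | seq _ _ ih1 ih2 => exact .seq ih1 ih2
    | par _ _ ih1 ih2 => exact .par ih1 ih2
    | loopX i1 => exact .loopX i1 l
    | loopH i1 => exact .loopH i1 l
    | loopS i1 => exact .loopS i1 l
    | loopP i1 => exact .loopP i1 l
  · intro l1 l2 a1 a2 hne h1 h2
    constructor
    · intro l
      by_cases h : θ a1 = l
      · exact .alt_right (.act (h2 ▸ h ▸ h1 ▸ fun e => hne e.symm))
      · exact .alt_left (.act h)
    · intro h
      cases h with
      | alt_left h => cases h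
      | alt_right h => cases h
end

section
/- Evasion is equivalent to existence and uniqueness of a pruned term: for any interaction term i and lifeline l, i ↓w l holds if and only if there exists a unique interaction i' such that the pruning relation i ⇝_l i' holds. -/
universe u v
variable {A : Type u} {L : Type v}

lemma prune_evades {θ : A → L} {l : L} {i i' : Interaction A}
    (h : Prune θ l i i') : Evades θ i l := by
  induction h with
  | empty => exact .empty l
  | act h => exact .act h
  | strict _ _ h1 h2 => exact .strict h1 h2
  | seq _ _ h1 h2 => exact .seq h1 h2
  | par _ _ h1 h2 => exact .par h1 h2
  | alt_both _ _ h1 _ => exact .alt_left h1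
  | alt_left _ _ h1 => exact .alt_left h1
  | alt_right _ _ h2 => exact .alt_right h2
  | loopX _ _ => exact .loopX _ _
  | loopH _ _ => exact .loopH _ _
  | loopS _ _ => exact .loopS _ _
  | loopP _ _ => exact .loopP _ _
  | loopX_elim _ => exact .loopX _ _
  | loopH_elim _ => exact .loopH _ _
  | loopS_elim _ => exact .loopS _ _
  | loopP_elim _ => exact .loopP _ _

lemma evades_exists_prune {θ : A → L} {l : L} :
    ∀ {i : Interaction A}, Evades θ i l → ∃ i', Prune θ l i i' := by
  intro i
  induction i with
  | empty => exact fun _ => ⟨_, .empty⟩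
  | act a => intro h; cases h with | act h => exact ⟨_, .act h⟩
  | strict i1 i2 ih1 ih2 =>
    intro h; cases h with
    | strict h1 h2 =>
      obtain ⟨a, ha⟩ := ih1 h1; obtain ⟨b, hb⟩ := ih2 h2
      exact ⟨_, .strict ha hb⟩
  | seq i1 i2 ih1 ih2 =>
    intro h; cases h with
    | seq h1 h2 =>
      obtain ⟨a, ha⟩ := ih1 h1; obtain ⟨b, hb⟩ := ih2 h2
      exact ⟨_, .seq ha hb⟩
  | par i1 i2 ih1 ih2 =>
    intro h; cases h with
    | par h1 h2 =>
      obtain ⟨a, ha⟩ := ih1 h1; obtain ⟨b, hb⟩ := ih2 h2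
      exact ⟨_, .par ha hb⟩
  | alt i1 i2 ih1 ih2 =>
    intro h
    by_cases h1 : Evades θ i1 l <;> by_cases h2 : Evades θ i2 l
    · obtain ⟨a, ha⟩ := ih1 h1; obtain ⟨b, hb⟩ := ih2 h2
      exact ⟨_, .alt_both ha hb⟩
    · obtain ⟨a, ha⟩ := ih1 h1; exact ⟨_, .alt_left ha h2⟩
    · obtain ⟨b, hb⟩ := ih2 h2; exact ⟨_, .alt_right hb h1⟩
    · cases h with
      | alt_left h => exact absurd h h1
      | alt_right h => exact absurd h h2
  | loopX i1 ih =>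
    intro _
    by_cases h1 : Evades θ i1 l
    · obtain ⟨a, ha⟩ := ih h1; exact ⟨_, .loopX ha⟩
    · exact ⟨_, .loopX_elim h1⟩
  | loopH i1 ih =>
    intro _
    by_cases h1 : Evades θ i1 l
    · obtain ⟨a, ha⟩ := ih h1; exact ⟨_, .loopH ha⟩
    · exact ⟨_, .loopH_elim h1⟩
  | loopS i1 ih =>
    intro _
    by_cases h1 : Evades θ i1 l
    · obtain ⟨a, ha⟩ := ih h1; exact ⟨_, .loopS ha⟩
    · exact ⟨_, .loopS_elim h1⟩
  | loopP i1 ih =>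
    intro _
    by_cases h1 : Evades θ i1 l
    · obtain ⟨a, ha⟩ := ih h1; exact ⟨_, .loopP ha⟩
    · exact ⟨_, .loopP_elim h1⟩

lemma prune_unique {θ : A → L} {l : L} {i i' i'' : Interaction A}
    (h : Prune θ l i i') (h' : Prune θ l i i'') : i' = i'' := by
  induction h generalizing i'' with
  | empty => cases h'; rfl
  | act _ => cases h'; rfl
  | strict _ _ ih1 ih2 => cases h' with
    | strict p1 p2 => rw [ih1 p1, ih2 p2]
  | seq _ _ ih1 ih2 => cases h' with
    | seq p1 p2 => rw [ih1 p1, ih2 p2]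
  | par _ _ ih1 ih2 => cases h' with
    | par p1 p2 => rw [ih1 p1, ih2 p2]
  | alt_both h1 h2 ih1 ih2 => cases h' with
    | alt_both p1 p2 => rw [ih1 p1, ih2 p2]
    | alt_left _ hn => exact absurd (prune_evades h2) hn
    | alt_right _ hn => exact absurd (prune_evades h1) hn
  | alt_left h1 hn ih1 => cases h' with
    | alt_both _ p2 => exact absurd (prune_evades p2) hn
    | alt_left p1 _ => exact ih1 p1
    | alt_right _ hn' => exact absurd (prune_evades h1) hn'
  | alt_right h2 hn ih2 => cases h' with
    | alt_both p1 _ => exact absurd (prune_evades p1) hn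
    | alt_left p1 _ => exact absurd (prune_evades p1) hn
    | alt_right p2 _ => exact ih2 p2
  | loopX h1 ih => cases h' with
    | loopX p1 => rw [ih p1]
    | loopX_elim hn => exact absurd (prune_evades h1) hn
  | loopH h1 ih => cases h' with
    | loopH p1 => rw [ih p1]
    | loopH_elim hn => exact absurd (prune_evades h1) hn
  | loopS h1 ih => cases h' with
    | loopS p1 => rw [ih p1]
    | loopS_elim hn => exact absurd (prune_evades h1) hn
  | loopP h1 ih => cases h' with
    | loopP p1 => rw [ih p1]
    | loopP_elim hn => exact absurd (prune_evades h1) hn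
  | loopX_elim hn => cases h' with
    | loopX p1 => exact absurd (prune_evades p1) hn
    | loopX_elim _ => rfl
  | loopH_elim hn => cases h' with
    | loopH p1 => exact absurd (prune_evades p1) hn
    | loopH_elim _ => rfl
  | loopS_elim hn => cases h' with
    | loopS p1 => exact absurd (prune_evades p1) hn
    | loopS_elim _ => rfl
  | loopP_elim hn => cases h' with
    | loopP p1 => exact absurd (prune_evades p1) hn
    | loopP_elim _ => rfl

theorem evades_iff_unique_prune {A : Type u} {L : Type v} (θ : A → L)
    (i : Interaction A) (l : L) :
    Evades θ i l ↔ ∃! i' : Interaction A, Prune θ l i i' := by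
  constructor
  · intro h
    obtain ⟨i', hp⟩ := evades_exists_prune h
    exact ⟨i', hp, fun j hj => prune_unique hj hp⟩
  · rintro ⟨i', hp, -⟩
    exact prune_evades hp
end
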